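/- Let g be a Lie algebra over ℝ or ℂ with elements written via ad, and p an element such that all expressions converge (or work with formal power series in ad(sp)). Then the 'cosh/sinh derivative' identities hold: for all α, β ∈ l* (with s : l* → g* as above, working in the double d), (i) d_p[sinh(ad_{s·})/ad_{s·}](α)(sβ) − d_p[sinh(ad_{s·})/ad_{s·}](β)(sα) = [(cosh(ad_{sp})−1)/ad_{sp} · sα, sinh(ad_{sp})/ad_{sp} · sβ] + [sinh(ad_{sp})/ad_{sp} · sα, (cosh(ad_{sp})−1)/ad_{sp} · sβ]; and (ii) d_p[(cosh(ad_{s·})−1)/ad_{s·}](α)(sβ) − d_p[(cosh(ad_{s·})−1)/ad_{s·}](β)(sα) = [sinh(ad_{sp})/ad_{sp} · sα, sinh(ad_{sp})/ad_{sp} · sβ] + [(cosh(ad_{sp})−1)/ad_{sp} · sα, (cosh(ad_{sp})−1)/ad_{sp} · sβ]. -/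

import Mathlib

set_option linter.unusedSectionVars false
set_option maxHeartbeats 1000000




section

variable {D : Type*} [NormedAddCommGroup D] [NormedSpace ℝ D] [FiniteDimensional ℝ D]

/-- `(sinh(ad_x)/ad_x) v = ∑_{n≥0} ad_x^{2n} v /(2n+1)!`, the bracket being given by
the bilinear map `lb` (so `ad_x = lb x`). -/
noncomputable def shOp (lb : D →ₗ[ℝ] D →ₗ[ℝ] D) (x v : D) : D :=
  ∑' n : ℕ, (((2 * n + 1).factorial : ℝ))⁻¹ • ((lb x ^ (2 * n)) v)

/-- `((cosh(ad_x)−1)/ad_x) v = ∑_{n≥0} ad_x^{2n+1} v /(2n+2)!`. -/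
noncomputable def chOp (lb : D →ₗ[ℝ] D →ₗ[ℝ] D) (x v : D) : D :=
  ∑' n : ℕ, (((2 * n + 2).factorial : ℝ))⁻¹ • ((lb x ^ (2 * n + 1)) v)

/-- Termwise directional derivative of `p ↦ (sinh(ad_{sp})/ad_{sp}) (sβ)` at `p` in the
direction `α`, computed by `d_x ad^n(u)v = ∑_{i=0}^{n−1} C(n,i+1)[ad_x^i u, ad_x^{n−i−1} v]`. -/
noncomputable def dSh {V : Type*} [AddCommGroup V] [Module ℝ V]
    (lb : D →ₗ[ℝ] D →ₗ[ℝ] D) (s : V →ₗ[ℝ] D) (p α β : V) : D :=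
  ∑' n : ℕ, (((2 * n + 1).factorial : ℝ))⁻¹ •
    ∑ i ∈ Finset.range (2 * n),
      ((2 * n).choose (i + 1) : ℝ) •
        lb ((lb (s p) ^ i) (s α)) ((lb (s p) ^ (2 * n - 1 - i)) (s β))

/-- Termwise directional derivative of `p ↦ ((cosh(ad_{sp})−1)/ad_{sp}) (sβ)` at `p` in
the direction `α`. -/
noncomputable def dCh {V : Type*} [AddCommGroup V] [Module ℝ V]
    (lb : D →ₗ[ℝ] D →ₗ[ℝ] D) (s : V →ₗ[ℝ] D) (p α β : V) : D :=
  ∑' n : ℕ, (((2 * n + 2).factorial : ℝ))⁻¹ •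
    ∑ i ∈ Finset.range (2 * n + 1),
      ((2 * n + 1).choose (i + 1) : ℝ) •
        lb ((lb (s p) ^ i) (s α)) ((lb (s p) ^ (2 * n - i)) (s β))

end

section AuxStmt19

variable {D : Type*} [NormedAddCommGroup D] [NormedSpace ℝ D] [FiniteDimensional ℝ D]

private lemma sum_range_even_odd' {E : Type*} [AddCommMonoid E] (h : ℕ → E) (n : ℕ) :
    ∑ i ∈ Finset.range (2 * n), h i
      = ∑ a ∈ Finset.range n, h (2 * a) + ∑ a ∈ Finset.range n, h (2 * a + 1) := by
  induction n with
  | zero => simp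
  | succ n ih =>
      have e : 2 * (n + 1) = (2 * n + 1) + 1 := by ring
      rw [e, Finset.sum_range_succ, Finset.sum_range_succ, Finset.sum_range_succ,
        Finset.sum_range_succ, ih]
      abel

private lemma sum_range_odd_even' {E : Type*} [AddCommMonoid E] (h : ℕ → E) (n : ℕ) :
    ∑ i ∈ Finset.range (2 * n + 1), h i
      = ∑ a ∈ Finset.range (n + 1), h (2 * a) + ∑ a ∈ Finset.range n, h (2 * a + 1) := by
  rw [Finset.sum_range_succ, sum_range_even_odd', Finset.sum_range_succ]
  abel

private lemma antidiag_aux' {E : Type*} [NormedAddCommGroup E] [CompleteSpace E]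
    {F : ℕ × ℕ → E} (h : Summable F) :
    Summable (fun n => ∑ kl ∈ Finset.HasAntidiagonal.antidiagonal n, F kl) ∧
    (∑' n : ℕ, ∑ kl ∈ Finset.HasAntidiagonal.antidiagonal n, F kl) = ∑' (m : ℕ) (n : ℕ), F (m, n) := by
  have hs : Summable fun x : Σ n : ℕ, {x // x ∈ Finset.HasAntidiagonal.antidiagonal n} =>
      F (Finset.HasAntidiagonal.sigmaAntidiagonalEquivProd x) :=
    Finset.HasAntidiagonal.sigmaAntidiagonalEquivProd.summable_iff.mpr h
  have hfin : ∀ n : ℕ, Summable fun c : {x // x ∈ Finset.HasAntidiagonal.antidiagonal n} =>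
      F (Finset.HasAntidiagonal.sigmaAntidiagonalEquivProd ⟨n, c⟩) := fun n => (hasSum_fintype _).summable
  have hsum1 : Summable (fun n => ∑ kl ∈ Finset.HasAntidiagonal.antidiagonal n, F kl) := by
    have := hs.sigma' hfin
    convert this using 2 with n
    rw [← Finset.sum_finset_coe, ← tsum_fintype (L := SummationFilter.unconditional _)]
    rfl
  refine ⟨hsum1, ?_⟩
  have h1 : (∑' p : ℕ × ℕ, F p) = ∑' (m : ℕ) (n : ℕ), F (m, n) :=
    Summable.tsum_prod' h (fun b => h.comp_injective (fun x y hxy => by simpa using hxy))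
  rw [← h1, ← Finset.HasAntidiagonal.sigmaAntidiagonalEquivProd.tsum_eq F, Summable.tsum_sigma' hfin hs]
  congr 1; funext n
  rw [← Finset.sum_finset_coe, ← tsum_fintype (L := SummationFilter.unconditional _)]
  rfl

private lemma shift_tsum' {E : Type*} [NormedAddCommGroup E] [CompleteSpace E]
    {F : ℕ × ℕ → E} (h : Summable F) :
    Summable (fun n : ℕ => if n = 0 then 0 else ∑ kl ∈ Finset.HasAntidiagonal.antidiagonal (n-1), F kl) ∧
    (∑' n : ℕ, if n = 0 then 0 else ∑ kl ∈ Finset.HasAntidiagonal.antidiagonal (n-1), F kl)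
      = ∑' (m : ℕ) (n : ℕ), F (m, n) := by
  have h1 := (antidiag_aux' h).1
  have hsum : Summable (fun n : ℕ =>
      if n = 0 then (0:E) else ∑ kl ∈ Finset.HasAntidiagonal.antidiagonal (n-1), F kl) := by
    apply (summable_nat_add_iff 1).mp
    simpa using h1
  refine ⟨hsum, ?_⟩
  rw [Summable.tsum_eq_zero_add hsum]
  simpa using (antidiag_aux' h).2

private lemma exists_K' (lb : D →ₗ[ℝ] D →ₗ[ℝ] D) :
    ∃ K : ℝ, 0 ≤ K ∧ ∀ a b : D, ‖lb a b‖ ≤ K * ‖a‖ * ‖b‖ := by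
  let T : D →L[ℝ] D →L[ℝ] D :=
    LinearMap.toContinuousLinearMap
      ((LinearMap.toContinuousLinearMap :
        (D →ₗ[ℝ] D) ≃ₗ[ℝ] (D →L[ℝ] D)).toLinearMap ∘ₗ lb)
  have hT : ∀ a b : D, T a b = lb a b := by intro a b; simp [T]
  refine ⟨‖T‖, T.opNorm_nonneg, fun a b => ?_⟩
  rw [← hT]
  calc ‖T a b‖ ≤ ‖T a‖ * ‖b‖ := (T a).le_opNorm b
    _ ≤ ‖T‖ * ‖a‖ * ‖b‖ := by gcongr; exact T.le_opNorm a

private lemma pow_bound' (lb : D →ₗ[ℝ] D →ₗ[ℝ] D) {K : ℝ} (hK0 : 0 ≤ K)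
    (hK : ∀ a b : D, ‖lb a b‖ ≤ K * ‖a‖ * ‖b‖) (x : D) (k : ℕ) (w : D) :
    ‖((lb x ^ k) w)‖ ≤ (K * ‖x‖) ^ k * ‖w‖ := by
  induction k with
  | zero => simp
  | succ k ih =>
      have h1 : (lb x ^ (k+1)) w = (lb x) ((lb x ^ k) w) := by
        rw [pow_succ']; rfl
      rw [h1, pow_succ']
      calc ‖(lb x) ((lb x ^ k) w)‖ ≤ K * ‖x‖ * ‖(lb x ^ k) w‖ := hK x _
        _ ≤ K * ‖x‖ * ((K * ‖x‖) ^ k * ‖w‖) := by gcongr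
        _ = (K * ‖x‖) * (K * ‖x‖) ^ k * ‖w‖ := by ring

private noncomputable def gfam (lb : D →ₗ[ℝ] D →ₗ[ℝ] D) (x u v : D) (q : ℕ × ℕ) : D :=
  (((q.1+1).factorial : ℝ) * ((q.2+1).factorial : ℝ))⁻¹ •
    lb ((lb x ^ q.1) u) ((lb x ^ q.2) v)

private noncomputable def Pterm (lb : D →ₗ[ℝ] D →ₗ[ℝ] D) (x u v : D) (m : ℕ) : D :=
  ((m+1).factorial : ℝ)⁻¹ • ∑ i ∈ Finset.range m,
    (m.choose (i+1) : ℝ) • lb ((lb x ^ i) u) ((lb x ^ (m-1-i)) v)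

private lemma fac_inv_le' {a b : ℕ} (h : a ≤ b) :
    ((b.factorial : ℝ))⁻¹ ≤ ((a.factorial : ℝ))⁻¹ := by
  apply inv_anti₀ (by positivity)
  exact_mod_cast Nat.factorial_le h

private lemma lb_norm_bound' (lb : D →ₗ[ℝ] D →ₗ[ℝ] D) {K : ℝ} (hK0 : 0 ≤ K)
    (hK : ∀ a b : D, ‖lb a b‖ ≤ K * ‖a‖ * ‖b‖) (x u v : D) (i j : ℕ) :
    ‖lb ((lb x ^ i) u) ((lb x ^ j) v)‖
      ≤ K * ((K * ‖x‖) ^ i * ‖u‖) * ((K * ‖x‖) ^ j * ‖v‖) := by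
  refine le_trans (hK _ _) ?_
  have h1 := pow_bound' lb hK0 hK x i u
  have h2 := pow_bound' lb hK0 hK x j v
  have hn2 : (0:ℝ) ≤ ‖(lb x ^ j) v‖ := norm_nonneg _
  have hp1 : (0:ℝ) ≤ (K * ‖x‖) ^ i * ‖u‖ :=
    mul_nonneg (pow_nonneg (mul_nonneg hK0 (norm_nonneg x)) i) (norm_nonneg u)
  exact mul_le_mul (mul_le_mul_of_nonneg_left h1 hK0) h2 hn2 (mul_nonneg hK0 hp1)

private lemma summable_gfam' (lb : D →ₗ[ℝ] D →ₗ[ℝ] D) {K : ℝ} (hK0 : 0 ≤ K)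
    (hK : ∀ a b : D, ‖lb a b‖ ≤ K * ‖a‖ * ‖b‖) (x u v : D) :
    Summable (gfam lb x u v) := by
  set C := K * ‖x‖ with hC
  have hC0 : 0 ≤ C := mul_nonneg hK0 (norm_nonneg x)
  apply Summable.of_norm_bounded
    (g := fun q : ℕ × ℕ => (C ^ q.1 / q.1.factorial * (C ^ q.2 / q.2.factorial)) * (K * ‖u‖ * ‖v‖))
  · apply Summable.mul_right
    exact (Real.summable_pow_div_factorial C).mul_of_nonneg
      (Real.summable_pow_div_factorial C)
      (fun i => by positivity) (fun i => by positivity)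
  · rintro ⟨i, j⟩
    have h1 := lb_norm_bound' lb hK0 hK x u v i j
    calc ‖gfam lb x u v (i, j)‖
        = (((i+1).factorial : ℝ) * ((j+1).factorial : ℝ))⁻¹ *
            ‖lb ((lb x ^ i) u) ((lb x ^ j) v)‖ := by
          rw [gfam, norm_smul, Real.norm_eq_abs, abs_of_nonneg (by positivity)]
      _ ≤ ((i.factorial : ℝ) * (j.factorial : ℝ))⁻¹ * (K * (C ^ i * ‖u‖) * (C ^ j * ‖v‖)) := by
          apply mul_le_mul _ h1 (norm_nonneg _) (by positivity)
          rw [mul_inv, mul_inv]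
          exact mul_le_mul (fac_inv_le' (Nat.le_succ i)) (fac_inv_le' (Nat.le_succ j))
            (by positivity) (by positivity)
      _ = (C ^ i / i.factorial * (C ^ j / j.factorial)) * (K * ‖u‖ * ‖v‖) := by
          rw [mul_inv]; ring

private lemma Pterm_bound' (lb : D →ₗ[ℝ] D →ₗ[ℝ] D) {K : ℝ} (hK0 : 0 ≤ K)
    (hK : ∀ a b : D, ‖lb a b‖ ≤ K * ‖a‖ * ‖b‖) (x u v : D) (m : ℕ) :
    ‖Pterm lb x u v m‖ ≤ (K * ‖u‖ * ‖v‖) * ((2 * max (K * ‖x‖) 1) ^ m / m.factorial) := by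
  set C := K * ‖x‖ with hC
  have hC0 : 0 ≤ C := mul_nonneg hK0 (norm_nonneg x)
  set E := max C 1 with hE
  have hE1 : (1:ℝ) ≤ E := le_max_right _ _
  have hE0 : (0:ℝ) ≤ E := le_trans zero_le_one hE1
  have hCE : C ≤ E := le_max_left _ _
  have hA : (0:ℝ) ≤ K * ‖u‖ * ‖v‖ :=
    mul_nonneg (mul_nonneg hK0 (norm_nonneg u)) (norm_nonneg v)
  have hterm : ∀ i ∈ Finset.range m,
      ‖(m.choose (i+1) : ℝ) • lb ((lb x ^ i) u) ((lb x ^ (m-1-i)) v)‖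
        ≤ (m.choose (i+1) : ℝ) * (K * ‖u‖ * ‖v‖ * E ^ m) := by
    intro i hi
    have him : i < m := Finset.mem_range.mp hi
    rw [norm_smul, Real.norm_eq_abs, abs_of_nonneg (by positivity)]
    apply mul_le_mul_of_nonneg_left _ (by positivity)
    calc ‖lb ((lb x ^ i) u) ((lb x ^ (m-1-i)) v)‖
        ≤ K * (C ^ i * ‖u‖) * (C ^ (m-1-i) * ‖v‖) := lb_norm_bound' lb hK0 hK x u v i (m-1-i)
      _ = K * ‖u‖ * ‖v‖ * C ^ (m-1) := by
          have hp : C ^ i * C ^ (m-1-i) = C ^ (m-1) := by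
            rw [← pow_add]; congr 1; omega
          rw [← hp]; ring
      _ ≤ K * ‖u‖ * ‖v‖ * E ^ m := by
          have h2 : C ^ (m-1) ≤ E ^ m :=
            le_trans (pow_le_pow_left₀ hC0 hCE _) (pow_le_pow_right₀ hE1 (by omega))
          exact mul_le_mul_of_nonneg_left h2 hA
  have hch : ∑ i ∈ Finset.range m, (m.choose (i+1) : ℝ) ≤ (2:ℝ) ^ m := by
    have h2 : ∑ i ∈ Finset.range (m+1), (m.choose i : ℝ) = (2:ℝ) ^ m := by
      exact_mod_cast congrArg (Nat.cast : ℕ → ℝ) (Nat.sum_range_choose m)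
    calc ∑ i ∈ Finset.range m, (m.choose (i+1) : ℝ)
        ≤ (m.choose 0 : ℝ) + ∑ i ∈ Finset.range m, (m.choose (i+1) : ℝ) := by
          have : (0:ℝ) ≤ (m.choose 0 : ℝ) := by positivity
          linarith
      _ = ∑ i ∈ Finset.range (m+1), (m.choose i : ℝ) := by
          rw [Finset.sum_range_succ']; ring
      _ = (2:ℝ) ^ m := h2
  calc ‖Pterm lb x u v m‖
      ≤ ((m+1).factorial : ℝ)⁻¹ *
          ∑ i ∈ Finset.range m, (m.choose (i+1) : ℝ) * (K * ‖u‖ * ‖v‖ * E ^ m) := by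
        rw [Pterm, norm_smul, Real.norm_eq_abs, abs_of_nonneg (by positivity)]
        apply mul_le_mul_of_nonneg_left _ (by positivity)
        exact le_trans (norm_sum_le _ _) (Finset.sum_le_sum hterm)
    _ ≤ (m.factorial : ℝ)⁻¹ * (2 ^ m * (K * ‖u‖ * ‖v‖ * E ^ m)) := by
        rw [← Finset.sum_mul]
        apply mul_le_mul (fac_inv_le' (Nat.le_succ m))
          (mul_le_mul_of_nonneg_right hch (mul_nonneg hA (pow_nonneg hE0 m)))
          (mul_nonneg (Finset.sum_nonneg fun i _ => by positivity)
            (mul_nonneg hA (pow_nonneg hE0 m))) (by positivity)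
    _ = (K * ‖u‖ * ‖v‖) * ((2 * E) ^ m / m.factorial) := by
        rw [mul_pow]; ring

private lemma lb_anti' (lb : D →ₗ[ℝ] D →ₗ[ℝ] D) (hlb_alt : ∀ x : D, lb x x = 0)
    (X Y : D) : lb X Y = - lb Y X := by
  have h0 := hlb_alt (X + Y)
  simp only [map_add, LinearMap.add_apply, hlb_alt, zero_add, add_zero] at h0
  apply eq_neg_of_add_eq_zero_left
  rw [add_comm] at h0
  exact h0

private lemma scalar_id' {m i : ℕ} (him : i < m) :
    ((m+1).factorial : ℝ)⁻¹ * ((m.choose (i+1) : ℝ) + (m.choose (m-i) : ℝ))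
      = (((i+1).factorial : ℝ) * ((m-i).factorial : ℝ))⁻¹ := by
  have hcs : m.choose (m-i) = m.choose i := Nat.choose_symm (le_of_lt him)
  have hfacn : (m+1).choose (i+1) * (i+1).factorial * (m-i).factorial = (m+1).factorial := by
    have h := Nat.choose_mul_factorial_mul_factorial (show i+1 ≤ m+1 by omega)
    simpa [show m+1-(i+1) = m-i by omega] using h
  have hR : (((m+1).choose (i+1) : ℝ)) * ((i+1).factorial : ℝ) * ((m-i).factorial : ℝ)
      = ((m+1).factorial : ℝ) := by exact_mod_cast congrArg (Nat.cast : ℕ → ℝ) hfacn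
  have h2 : (m.choose (i+1) : ℝ) + (m.choose i : ℝ) = ((m+1).choose (i+1) : ℝ) := by
    have := Nat.choose_succ_succ m i
    push_cast [this]; ring
  rw [hcs, h2]
  have hf1 : ((m+1).factorial : ℝ) ≠ 0 := by positivity
  have hf2 : (((i+1).factorial : ℝ)) ≠ 0 := by positivity
  have hf3 : (((m-i).factorial : ℝ)) ≠ 0 := by positivity
  field_simp
  linarith [hR]

private lemma Pterm_diff' (lb : D →ₗ[ℝ] D →ₗ[ℝ] D) (hlb_alt : ∀ x : D, lb x x = 0)
    (x u v : D) (m : ℕ) :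
    Pterm lb x u v m - Pterm lb x v u m
      = ∑ i ∈ Finset.range m, (((i+1).factorial : ℝ) * ((m-i).factorial : ℝ))⁻¹ •
          lb ((lb x ^ i) u) ((lb x ^ (m-1-i)) v) := by
  have hS2 : (∑ i ∈ Finset.range m, (m.choose (i+1) : ℝ) • lb ((lb x ^ i) v) ((lb x ^ (m-1-i)) u))
      = - ∑ i ∈ Finset.range m, (m.choose (m-i) : ℝ) • lb ((lb x ^ i) u) ((lb x ^ (m-1-i)) v) := by
    rw [← Finset.sum_range_reflect
      (fun j => (m.choose (j+1) : ℝ) • lb ((lb x ^ j) v) ((lb x ^ (m-1-j)) u)) m,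
      ← Finset.sum_neg_distrib]
    apply Finset.sum_congr rfl
    intro i hi
    have him : i < m := Finset.mem_range.mp hi
    have e1 : m - 1 - i + 1 = m - i := by omega
    have e2 : m - 1 - (m - 1 - i) = i := by omega
    rw [e1, e2, lb_anti' lb hlb_alt ((lb x ^ (m-1-i)) v) ((lb x ^ i) u), smul_neg]
  rw [Pterm, Pterm, ← smul_sub, hS2, sub_neg_eq_add, ← Finset.sum_add_distrib,
    Finset.smul_sum]
  apply Finset.sum_congr rfl
  intro i hi
  have him : i < m := Finset.mem_range.mp hi
  rw [← add_smul, smul_smul, scalar_id' him]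

private lemma lb_tsum_tsum' (lb : D →ₗ[ℝ] D →ₗ[ℝ] D) (a b : ℕ → D)
    (ha : Summable a) (hb : Summable b) :
    lb (∑' m, a m) (∑' n, b n) = ∑' m, ∑' n, lb (a m) (b n) := by
  let T : D →L[ℝ] D →L[ℝ] D :=
    LinearMap.toContinuousLinearMap
      ((LinearMap.toContinuousLinearMap :
        (D →ₗ[ℝ] D) ≃ₗ[ℝ] (D →L[ℝ] D)).toLinearMap ∘ₗ lb)
  have hT : ∀ a b : D, T a b = lb a b := by intro a b; simp [T]
  have ha' : Summable fun m => T (a m) := ha.mapL T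
  calc lb (∑' m, a m) (∑' n, b n) = T (∑' m, a m) (∑' n, b n) := (hT _ _).symm
    _ = (∑' m, T (a m)) (∑' n, b n) := by rw [T.map_tsum ha]
    _ = ∑' m, T (a m) (∑' n, b n) :=
        (ContinuousLinearMap.apply ℝ D (∑' n, b n)).map_tsum ha'
    _ = ∑' m, ∑' n, T (a m) (b n) := tsum_congr fun m => (T (a m)).map_tsum hb
    _ = ∑' m, ∑' n, lb (a m) (b n) :=
        tsum_congr fun m => tsum_congr fun n => hT _ _

private lemma Pdiff_even (lb : D →ₗ[ℝ] D →ₗ[ℝ] D) (hlb_alt : ∀ x : D, lb x x = 0)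
    (x u v : D) (n : ℕ) :
    Pterm lb x u v (2*n) - Pterm lb x v u (2*n)
      = (if n = 0 then 0 else
          ∑ kl ∈ Finset.HasAntidiagonal.antidiagonal (n-1), gfam lb x u v (2*kl.1+1, 2*kl.2))
        + (if n = 0 then 0 else
          ∑ kl ∈ Finset.HasAntidiagonal.antidiagonal (n-1), gfam lb x u v (2*kl.1, 2*kl.2+1)) := by
  cases n with
  | zero => simp [Pterm]
  | succ N =>
      rw [Pterm_diff' lb hlb_alt x u v (2*(N+1))]
      simp only [Nat.succ_ne_zero, if_false, Nat.add_sub_cancel]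
      rw [sum_range_even_odd' (fun i => (((i+1).factorial : ℝ) *
          ((2*(N+1)-i).factorial : ℝ))⁻¹ •
          lb ((lb x ^ i) u) ((lb x ^ (2*(N+1)-1-i)) v)) (N+1)]
      rw [Finset.Nat.sum_antidiagonal_eq_sum_range_succ_mk,
        Finset.Nat.sum_antidiagonal_eq_sum_range_succ_mk]
      rw [add_comm]
      congr 1
      · apply Finset.sum_congr rfl
        intro a ha
        have haN : a ≤ N := Nat.lt_succ_iff.mp (Finset.mem_range.mp ha)
        simp only [gfam]
        rw [show 2*(N+1) - (2*a+1) = 2*(N-a)+1 from by omega,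
          show 2*(N+1) - 1 - (2*a+1) = 2*(N-a) from by omega]
      · apply Finset.sum_congr rfl
        intro a ha
        have haN : a ≤ N := Nat.lt_succ_iff.mp (Finset.mem_range.mp ha)
        simp only [gfam]
        rw [show 2*(N+1) - 2*a = 2*(N-a)+2 from by omega,
          show 2*(N+1) - 1 - 2*a = 2*(N-a)+1 from by omega]

private lemma Pdiff_odd (lb : D →ₗ[ℝ] D →ₗ[ℝ] D) (hlb_alt : ∀ x : D, lb x x = 0)
    (x u v : D) (n : ℕ) :
    Pterm lb x u v (2*n+1) - Pterm lb x v u (2*n+1)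
      = (∑ kl ∈ Finset.HasAntidiagonal.antidiagonal n, gfam lb x u v (2*kl.1, 2*kl.2))
        + (if n = 0 then 0 else
          ∑ kl ∈ Finset.HasAntidiagonal.antidiagonal (n-1), gfam lb x u v (2*kl.1+1, 2*kl.2+1)) := by
  rw [Pterm_diff' lb hlb_alt x u v (2*n+1)]
  rw [sum_range_odd_even' (fun i => (((i+1).factorial : ℝ) *
      ((2*n+1-i).factorial : ℝ))⁻¹ •
      lb ((lb x ^ i) u) ((lb x ^ (2*n+1-1-i)) v)) n]
  congr 1
  · rw [Finset.Nat.sum_antidiagonal_eq_sum_range_succ_mk]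
    apply Finset.sum_congr rfl
    intro a ha
    have haN : a ≤ n := Nat.lt_succ_iff.mp (Finset.mem_range.mp ha)
    simp only [gfam]
    rw [show 2*n+1 - 2*a = 2*(n-a)+1 from by omega,
      show 2*n+1 - 1 - 2*a = 2*(n-a) from by omega]
  · cases n with
    | zero => simp
    | succ N =>
        simp only [Nat.succ_ne_zero, if_false, Nat.add_sub_cancel]
        rw [Finset.Nat.sum_antidiagonal_eq_sum_range_succ_mk]
        apply Finset.sum_congr rfl
        intro a ha
        have haN : a ≤ N := Nat.lt_succ_iff.mp (Finset.mem_range.mp ha)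
        simp only [gfam]
        rw [show 2*(N+1)+1 - (2*a+1) = 2*(N-a)+2 from by omega,
          show 2*(N+1) - (2*a+1) = 2*(N-a)+1 from by omega]

end AuxStmt19

section

variable {D : Type*} [NormedAddCommGroup D] [NormedSpace ℝ D] [FiniteDimensional ℝ D]

/-- The cosh/sinh derivative identities (Lemma on `d sinh(ad)/ad` and
`d (cosh(ad)−1)/ad`): the skew-symmetrized directional derivatives of
`p ↦ (sinh(ad_{sp})/ad_{sp}) sβ` and `p ↦ ((cosh(ad_{sp})−1)/ad_{sp}) sβ` are given by
brackets of the sinh/cosh operators. -/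
theorem stmt_19 {V : Type*} [AddCommGroup V] [Module ℝ V]
    (lb : D →ₗ[ℝ] D →ₗ[ℝ] D)
    (hlb_alt : ∀ x : D, lb x x = 0)
    (hlb_jac : ∀ x y z : D, lb x (lb y z) = lb (lb x y) z + lb y (lb x z))
    (s : V →ₗ[ℝ] D) (p α β : V) :
    (dSh lb s p α β - dSh lb s p β α
        = lb (chOp lb (s p) (s α)) (shOp lb (s p) (s β))
          + lb (shOp lb (s p) (s α)) (chOp lb (s p) (s β)))
      ∧ (dCh lb s p α β - dCh lb s p β α
          = lb (shOp lb (s p) (s α)) (shOp lb (s p) (s β))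
            + lb (chOp lb (s p) (s α)) (chOp lb (s p) (s β))) := by
  obtain ⟨K, hK0, hK⟩ := exists_K' lb
  set x := s p with hxdef
  set u := s α with hudef
  set v := s β with hvdef
  set C := K * ‖x‖ with hCdef
  have hC0 : 0 ≤ C := mul_nonneg hK0 (norm_nonneg x)
  have hq : ∀ c : ℝ, Summable (fun j : ℕ => c ^ j / j.factorial) :=
    Real.summable_pow_div_factorial
  have hinj2 : Function.Injective (fun n : ℕ => 2 * n) := fun a b h => by
    have h' : 2 * a = 2 * b := h
    omega
  have hinj21 : Function.Injective (fun n : ℕ => 2 * n + 1) := fun a b h => by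
    have h' : 2 * a + 1 = 2 * b + 1 := h
    omega
  -- summability of the sinh/cosh component series
  have hshsum : ∀ w : D,
      Summable (fun n : ℕ => (((2*n+1).factorial : ℝ))⁻¹ • ((lb x ^ (2*n)) w)) := by
    intro w
    have hb1 : Summable (fun n : ℕ => C ^ (2*n) / (2*n).factorial * ‖w‖) :=
      Summable.mul_right _ ((hq C).comp_injective hinj2)
    apply Summable.of_norm_bounded hb1
    intro n
    rw [norm_smul, Real.norm_eq_abs, abs_of_nonneg (by positivity)]
    calc (((2*n+1).factorial : ℝ))⁻¹ * ‖(lb x ^ (2*n)) w‖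
        ≤ (((2*n).factorial : ℝ))⁻¹ * (C ^ (2*n) * ‖w‖) :=
          mul_le_mul (fac_inv_le' (Nat.le_succ _)) (pow_bound' lb hK0 hK x (2*n) w)
            (norm_nonneg _) (by positivity)
      _ = C ^ (2*n) / (2*n).factorial * ‖w‖ := by ring
  have hchsum : ∀ w : D,
      Summable (fun n : ℕ => (((2*n+2).factorial : ℝ))⁻¹ • ((lb x ^ (2*n+1)) w)) := by
    intro w
    have hb1 : Summable (fun n : ℕ => C ^ (2*n+1) / (2*n+1).factorial * ‖w‖) :=
      Summable.mul_right _ ((hq C).comp_injective hinj21)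
    apply Summable.of_norm_bounded hb1
    intro n
    rw [norm_smul, Real.norm_eq_abs, abs_of_nonneg (by positivity)]
    calc (((2*n+2).factorial : ℝ))⁻¹ * ‖(lb x ^ (2*n+1)) w‖
        ≤ (((2*n+1).factorial : ℝ))⁻¹ * (C ^ (2*n+1) * ‖w‖) :=
          mul_le_mul (fac_inv_le' (Nat.le_succ _)) (pow_bound' lb hK0 hK x (2*n+1) w)
            (norm_nonneg _) (by positivity)
      _ = C ^ (2*n+1) / (2*n+1).factorial * ‖w‖ := by ring
  -- summability of the gfam families
  have hguv : Summable (gfam lb x u v) := summable_gfam' lb hK0 hK x u v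
  have hinj_oe : Function.Injective (fun q : ℕ × ℕ => ((2*q.1+1, 2*q.2) : ℕ × ℕ)) := by
    rintro ⟨a,b⟩ ⟨c,d⟩ h; simp only [Prod.mk.injEq] at h ⊢; omega
  have hinj_eo : Function.Injective (fun q : ℕ × ℕ => ((2*q.1, 2*q.2+1) : ℕ × ℕ)) := by
    rintro ⟨a,b⟩ ⟨c,d⟩ h; simp only [Prod.mk.injEq] at h ⊢; omega
  have hinj_ee : Function.Injective (fun q : ℕ × ℕ => ((2*q.1, 2*q.2) : ℕ × ℕ)) := by
    rintro ⟨a,b⟩ ⟨c,d⟩ h; simp only [Prod.mk.injEq] at h ⊢; omega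
  have hinj_oo : Function.Injective (fun q : ℕ × ℕ => ((2*q.1+1, 2*q.2+1) : ℕ × ℕ)) := by
    rintro ⟨a,b⟩ ⟨c,d⟩ h; simp only [Prod.mk.injEq] at h ⊢; omega
  have hgoe : Summable (fun q : ℕ × ℕ => gfam lb x u v (2*q.1+1, 2*q.2)) :=
    hguv.comp_injective hinj_oe
  have hgeo : Summable (fun q : ℕ × ℕ => gfam lb x u v (2*q.1, 2*q.2+1)) :=
    hguv.comp_injective hinj_eo
  have hgee : Summable (fun q : ℕ × ℕ => gfam lb x u v (2*q.1, 2*q.2)) :=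
    hguv.comp_injective hinj_ee
  have hgoo : Summable (fun q : ℕ × ℕ => gfam lb x u v (2*q.1+1, 2*q.2+1)) :=
    hguv.comp_injective hinj_oo
  -- summability of the Pterm series
  have hPsum_even : ∀ u' v' : D, Summable (fun n : ℕ => Pterm lb x u' v' (2*n)) := by
    intro u' v'
    have hb1 : Summable (fun n : ℕ => (K * ‖u'‖ * ‖v'‖) * ((2 * max C 1) ^ (2*n) / (2*n).factorial)) :=
      Summable.mul_left _ ((hq (2 * max C 1)).comp_injective hinj2)
    apply Summable.of_norm_bounded hb1
    intro n
    exact Pterm_bound' lb hK0 hK x u' v' (2*n)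
  have hPsum_odd : ∀ u' v' : D, Summable (fun n : ℕ => Pterm lb x u' v' (2*n+1)) := by
    intro u' v'
    have hb1 : Summable (fun n : ℕ => (K * ‖u'‖ * ‖v'‖) * ((2 * max C 1) ^ (2*n+1) / (2*n+1).factorial)) :=
      Summable.mul_left _ ((hq (2 * max C 1)).comp_injective hinj21)
    apply Summable.of_norm_bounded hb1
    intro n
    exact Pterm_bound' lb hK0 hK x u' v' (2*n+1)
  -- the four bracket computations
  have hbr_cs : lb (chOp lb x u) (shOp lb x v)
      = ∑' (m : ℕ) (n : ℕ), gfam lb x u v (2*m+1, 2*n) := by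
    calc lb (chOp lb x u) (shOp lb x v)
        = ∑' (m : ℕ) (n : ℕ), lb ((((2*m+2).factorial : ℝ))⁻¹ • ((lb x ^ (2*m+1)) u))
            ((((2*n+1).factorial : ℝ))⁻¹ • ((lb x ^ (2*n)) v)) :=
          lb_tsum_tsum' lb _ _ (hchsum u) (hshsum v)
      _ = ∑' (m : ℕ) (n : ℕ), gfam lb x u v (2*m+1, 2*n) := by
          refine tsum_congr fun m => tsum_congr fun n => ?_
          simp only [gfam, map_smul, LinearMap.smul_apply, smul_smul, ← mul_inv]
          norm_num [mul_comm]
  have hbr_sc : lb (shOp lb x u) (chOp lb x v)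
      = ∑' (m : ℕ) (n : ℕ), gfam lb x u v (2*m, 2*n+1) := by
    calc lb (shOp lb x u) (chOp lb x v)
        = ∑' (m : ℕ) (n : ℕ), lb ((((2*m+1).factorial : ℝ))⁻¹ • ((lb x ^ (2*m)) u))
            ((((2*n+2).factorial : ℝ))⁻¹ • ((lb x ^ (2*n+1)) v)) :=
          lb_tsum_tsum' lb _ _ (hshsum u) (hchsum v)
      _ = ∑' (m : ℕ) (n : ℕ), gfam lb x u v (2*m, 2*n+1) := by
          refine tsum_congr fun m => tsum_congr fun n => ?_
          simp only [gfam, map_smul, LinearMap.smul_apply, smul_smul, ← mul_inv]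
          norm_num [mul_comm]
  have hbr_ss : lb (shOp lb x u) (shOp lb x v)
      = ∑' (m : ℕ) (n : ℕ), gfam lb x u v (2*m, 2*n) := by
    calc lb (shOp lb x u) (shOp lb x v)
        = ∑' (m : ℕ) (n : ℕ), lb ((((2*m+1).factorial : ℝ))⁻¹ • ((lb x ^ (2*m)) u))
            ((((2*n+1).factorial : ℝ))⁻¹ • ((lb x ^ (2*n)) v)) :=
          lb_tsum_tsum' lb _ _ (hshsum u) (hshsum v)
      _ = ∑' (m : ℕ) (n : ℕ), gfam lb x u v (2*m, 2*n) := by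
          refine tsum_congr fun m => tsum_congr fun n => ?_
          simp only [gfam, map_smul, LinearMap.smul_apply, smul_smul, ← mul_inv]
          norm_num [mul_comm]
  have hbr_cc : lb (chOp lb x u) (chOp lb x v)
      = ∑' (m : ℕ) (n : ℕ), gfam lb x u v (2*m+1, 2*n+1) := by
    calc lb (chOp lb x u) (chOp lb x v)
        = ∑' (m : ℕ) (n : ℕ), lb ((((2*m+2).factorial : ℝ))⁻¹ • ((lb x ^ (2*m+1)) u))
            ((((2*n+2).factorial : ℝ))⁻¹ • ((lb x ^ (2*n+1)) v)) :=
          lb_tsum_tsum' lb _ _ (hchsum u) (hchsum v)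
      _ = ∑' (m : ℕ) (n : ℕ), gfam lb x u v (2*m+1, 2*n+1) := by
          refine tsum_congr fun m => tsum_congr fun n => ?_
          simp only [gfam, map_smul, LinearMap.smul_apply, smul_smul, ← mul_inv]
          norm_num [mul_comm]
  constructor
  · calc dSh lb s p α β - dSh lb s p β α
        = ∑' n : ℕ, (Pterm lb x u v (2*n) - Pterm lb x v u (2*n)) :=
          (Summable.tsum_sub (hPsum_even u v) (hPsum_even v u)).symm
      _ = ∑' n : ℕ,
            ((if n = 0 then 0 else
              ∑ kl ∈ Finset.HasAntidiagonal.antidiagonal (n-1), gfam lb x u v (2*kl.1+1, 2*kl.2))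
            + (if n = 0 then 0 else
              ∑ kl ∈ Finset.HasAntidiagonal.antidiagonal (n-1), gfam lb x u v (2*kl.1, 2*kl.2+1))) :=
          tsum_congr fun n => Pdiff_even lb hlb_alt x u v n
      _ = (∑' n : ℕ, if n = 0 then 0 else
              ∑ kl ∈ Finset.HasAntidiagonal.antidiagonal (n-1), gfam lb x u v (2*kl.1+1, 2*kl.2))
          + (∑' n : ℕ, if n = 0 then 0 else
              ∑ kl ∈ Finset.HasAntidiagonal.antidiagonal (n-1), gfam lb x u v (2*kl.1, 2*kl.2+1)) :=
          Summable.tsum_add (shift_tsum' hgoe).1 (shift_tsum' hgeo).1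
      _ = (∑' (m : ℕ) (n : ℕ), gfam lb x u v (2*m+1, 2*n))
          + (∑' (m : ℕ) (n : ℕ), gfam lb x u v (2*m, 2*n+1)) := by
          congr 1
          · exact (shift_tsum' hgoe).2
          · exact (shift_tsum' hgeo).2
      _ = lb (chOp lb x u) (shOp lb x v) + lb (shOp lb x u) (chOp lb x v) := by
          rw [hbr_cs, hbr_sc]
  · calc dCh lb s p α β - dCh lb s p β α
        = ∑' n : ℕ, (Pterm lb x u v (2*n+1) - Pterm lb x v u (2*n+1)) :=
          (Summable.tsum_sub (hPsum_odd u v) (hPsum_odd v u)).symm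
      _ = ∑' n : ℕ,
            ((∑ kl ∈ Finset.HasAntidiagonal.antidiagonal n, gfam lb x u v (2*kl.1, 2*kl.2))
            + (if n = 0 then 0 else
              ∑ kl ∈ Finset.HasAntidiagonal.antidiagonal (n-1), gfam lb x u v (2*kl.1+1, 2*kl.2+1))) :=
          tsum_congr fun n => Pdiff_odd lb hlb_alt x u v n
      _ = (∑' n : ℕ, ∑ kl ∈ Finset.HasAntidiagonal.antidiagonal n, gfam lb x u v (2*kl.1, 2*kl.2))
          + (∑' n : ℕ, if n = 0 then 0 else
              ∑ kl ∈ Finset.HasAntidiagonal.antidiagonal (n-1), gfam lb x u v (2*kl.1+1, 2*kl.2+1)) :=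
          Summable.tsum_add (antidiag_aux' hgee).1 (shift_tsum' hgoo).1
      _ = (∑' (m : ℕ) (n : ℕ), gfam lb x u v (2*m, 2*n))
          + (∑' (m : ℕ) (n : ℕ), gfam lb x u v (2*m+1, 2*n+1)) := by
          congr 1
          · exact (antidiag_aux' hgee).2
          · exact (shift_tsum' hgoo).2
      _ = lb (shOp lb x u) (shOp lb x v) + lb (chOp lb x u) (chOp lb x v) := by
          rw [hbr_ss, hbr_cc]

end
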